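/- Let M be a KGinv-model (respectively, a KGinvF-model), w a world of M, and φ ∈ L_inv. Then there is a tree-like KGinv-model (respectively, KGinvF-model) M̂ with root ŵ such that the height of M̂ is at most |φ| and the value of φ at ŵ in M̂ equals the value of φ at w in M. -/

import Mathlib

noncomputable def Gimp (x y : ℝ) : ℝ := if x ≤ y then 1 else y

inductive Fml : Type
  | var : ℕ → Fml
  | inv : Fml → Fml
  | and : Fml → Fml → Fml
  | imp : Fml → Fml → Fml
  | box : Fml → Fml
  | dia : Fml → Fml
  deriving DecidableEq

noncomputable def Fml.eval {W : Type} (R : W → W → ℝ) (v : ℕ → W → ℝ) : Fml → W → ℝ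
  | .var p, w => v p w
  | .inv φ, w => 1 - Fml.eval R v φ w
  | .and φ χ, w => min (Fml.eval R v φ w) (Fml.eval R v χ w)
  | .imp φ χ, w => Gimp (Fml.eval R v φ w) (Fml.eval R v χ w)
  | .box φ, w => sInf (Set.range fun w' => Gimp (R w w') (Fml.eval R v φ w'))
  | .dia φ, w => sSup (Set.range fun w' => min (R w w') (Fml.eval R v φ w'))

def KGinvValid {W : Type} (R : W → W → ℝ) (φ : Fml) : Prop :=
  ∀ v : ℕ → W → ℝ, (∀ p w, v p w ∈ Set.Icc (0:ℝ) 1) → ∀ w : W, Fml.eval R v φ w = 1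

/-- An F-model: the data of a fuzzy frame with finitely many admissible modal values
at each state, together with a valuation. -/
structure FModel (W : Type) where
  R : W → W → ℝ
  T : W → Set ℝ
  v : ℕ → W → ℝ

/-- The conditions on the data of an F-model. -/
def FModel.Good {W : Type} (M : FModel W) : Prop :=
  (∀ w w', M.R w w' ∈ Set.Icc (0:ℝ) 1) ∧
  (∀ w, (M.T w).Finite) ∧
  (∀ w, M.T w ⊆ Set.Icc (0:ℝ) 1) ∧
  (∀ w, (0:ℝ) ∈ M.T w ∧ (1:ℝ) ∈ M.T w) ∧
  (∀ p w, M.v p w ∈ Set.Icc (0:ℝ) 1)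

noncomputable def FModel.eval {W : Type} (M : FModel W) : Fml → W → ℝ
  | .var p, w => M.v p w
  | .inv φ, w => 1 - FModel.eval M φ w
  | .and φ χ, w => min (FModel.eval M φ w) (FModel.eval M χ w)
  | .imp φ χ, w => Gimp (FModel.eval M φ w) (FModel.eval M χ w)
  | .box φ, w =>
      sSup {x | x ∈ M.T w ∧
        x ≤ sInf (Set.range fun w' => Gimp (M.R w w') (FModel.eval M φ w'))}
  | .dia φ, w =>
      sInf {x | x ∈ M.T w ∧
        sSup (Set.range fun w' => min (M.R w w') (FModel.eval M φ w')) ≤ x}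

/-- The accessibility graph of a fuzzy relation. -/
def Epos {W : Type} (R : W → W → ℝ) : W → W → Prop := fun a b => 0 < R a b

/-- The directed graph E on W is a tree with root r. -/
def IsTreeLike {W : Type} (E : W → W → Prop) (r : W) : Prop :=
  (∀ w, Relation.ReflTransGen E r w) ∧
  (∀ w, ¬ E w r) ∧
  (∀ u u' w, E u w → E u' w → u = u') ∧
  (∀ w, ¬ Relation.TransGen E w w)

/-- Every E-path starting at the root r has length at most n. -/
def HeightLE {W : Type} (E : W → W → Prop) (r : W) (n : ℕ) : Prop :=
  ∀ (k : ℕ) (f : ℕ → W), f 0 = r → (∀ i, i < k → E (f i) (f (i+1))) → k ≤ n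

/-- The number of symbols of a formula. -/
def Fml.size : Fml → ℕ
  | .var _ => 1
  | .inv φ => φ.size + 1
  | .and φ χ => φ.size + χ.size + 1
  | .imp φ χ => φ.size + χ.size + 1
  | .box φ => φ.size + 1
  | .dia φ => φ.size + 1

/-! ### Auxiliary machinery -/

lemma Fml.size_pos' (φ : Fml) : 1 ≤ φ.size := by
  cases φ <;> simp [Fml.size]

lemma Gimp_mem_Icc {x y : ℝ} (hy : y ∈ Set.Icc (0:ℝ) 1) :
    Gimp x y ∈ Set.Icc (0:ℝ) 1 := by
  unfold Gimp; split
  · exact ⟨zero_le_one, le_refl 1⟩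
  · exact hy

lemma Gimp_zero_left {y : ℝ} (hy : 0 ≤ y) : Gimp 0 y = 1 := if_pos hy

section RangeLemmas

variable {ι κ : Type} [Nonempty ι] [Nonempty κ]

lemma sInf_range_le (f : ι → ℝ) (g : κ → ℝ)
    (hf : ∀ i, f i ∈ Set.Icc (0:ℝ) 1) (hg : ∀ j, g j ∈ Set.Icc (0:ℝ) 1)
    (h1 : ∀ i, f i = 1 ∨ ∃ j, f i = g j) :
    sInf (Set.range g) ≤ sInf (Set.range f) := by
  have bg : BddBelow (Set.range g) := ⟨0, by rintro _ ⟨j, rfl⟩; exact (hg j).1⟩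
  have hle1 : sInf (Set.range g) ≤ 1 := by
    obtain ⟨j⟩ := ‹Nonempty κ›
    exact le_trans (csInf_le bg (Set.mem_range_self j)) (hg j).2
  apply le_csInf (Set.range_nonempty f)
  rintro _ ⟨i, rfl⟩
  rcases h1 i with h | ⟨j, h⟩
  · rw [h]; exact hle1
  · rw [h]; exact csInf_le bg (Set.mem_range_self j)

lemma sInf_range_eq' (f : ι → ℝ) (g : κ → ℝ)
    (hf : ∀ i, f i ∈ Set.Icc (0:ℝ) 1) (hg : ∀ j, g j ∈ Set.Icc (0:ℝ) 1)
    (h1 : ∀ i, f i = 1 ∨ ∃ j, f i = g j)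
    (h2 : ∀ j, g j = 1 ∨ ∃ i, g j = f i) :
    sInf (Set.range f) = sInf (Set.range g) :=
  le_antisymm (sInf_range_le g f hg hf h2) (sInf_range_le f g hf hg h1)

lemma sSup_range_le (f : ι → ℝ) (g : κ → ℝ)
    (hf : ∀ i, f i ∈ Set.Icc (0:ℝ) 1) (hg : ∀ j, g j ∈ Set.Icc (0:ℝ) 1)
    (h1 : ∀ i, f i = 0 ∨ ∃ j, f i = g j) :
    sSup (Set.range f) ≤ sSup (Set.range g) := by
  have bg : BddAbove (Set.range g) := ⟨1, by rintro _ ⟨j, rfl⟩; exact (hg j).2⟩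
  have hle0 : 0 ≤ sSup (Set.range g) := by
    obtain ⟨j⟩ := ‹Nonempty κ›
    exact le_trans (hg j).1 (le_csSup bg (Set.mem_range_self j))
  apply csSup_le (Set.range_nonempty f)
  rintro _ ⟨i, rfl⟩
  rcases h1 i with h | ⟨j, h⟩
  · rw [h]; exact hle0
  · rw [h]; exact le_csSup bg (Set.mem_range_self j)

lemma sSup_range_eq' (f : ι → ℝ) (g : κ → ℝ)
    (hf : ∀ i, f i ∈ Set.Icc (0:ℝ) 1) (hg : ∀ j, g j ∈ Set.Icc (0:ℝ) 1)
    (h1 : ∀ i, f i = 0 ∨ ∃ j, f i = g j)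
    (h2 : ∀ j, g j = 0 ∨ ∃ i, g j = f i) :
    sSup (Set.range f) = sSup (Set.range g) :=
  le_antisymm (sSup_range_le f g hf hg h1) (sSup_range_le g f hg hf h2)

end RangeLemmas

/-- Validity of a (reversed) path starting at `w`. -/
def Valid {W : Type} (R : W → W → ℝ) (w : W) : List W → Prop
  | [] => True
  | a :: l => 0 < R (l.headD w) a ∧ Valid R w l

/-- Worlds of the unravelled tree: valid paths of bounded length. -/
def PW (W : Type) (R : W → W → ℝ) (w : W) (n : ℕ) : Type :=
  {l : List W // Valid R w l ∧ l.length ≤ n}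

def PW.root {W : Type} (R : W → W → ℝ) (w : W) (n : ℕ) : PW W R w n :=
  ⟨[], trivial, Nat.zero_le n⟩

instance {W : Type} (R : W → W → ℝ) (w : W) (n : ℕ) : Nonempty (PW W R w n) :=
  ⟨PW.root R w n⟩

open Classical in
/-- The unravelled accessibility relation. -/
noncomputable def Rp {W : Type} (R : W → W → ℝ) (w : W) (n : ℕ)
    (p q : PW W R w n) : ℝ :=
  if ∃ a, q.1 = a :: p.1 then R (p.1.headD w) (q.1.headD w) else 0

lemma Rp_pos_iff {W : Type} {R : W → W → ℝ} {w : W} {n : ℕ} {p q : PW W R w n} :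
    0 < Rp R w n p q ↔ ∃ a, q.1 = a :: p.1 := by
  constructor
  · intro h
    by_contra hc
    rw [Rp, if_neg hc] at h
    exact lt_irrefl 0 h
  · rintro ⟨a, ha⟩
    rw [Rp, if_pos ⟨a, ha⟩, ha]
    have hq := q.2.1
    rw [ha] at hq
    exact hq.1

lemma Rp_mem {W : Type} (R : W → W → ℝ) (hR : ∀ a b, R a b ∈ Set.Icc (0:ℝ) 1)
    (w : W) (n : ℕ) (p q : PW W R w n) : Rp R w n p q ∈ Set.Icc (0:ℝ) 1 := by
  rw [Rp]; split
  · exact hR _ _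
  · exact ⟨le_refl 0, zero_le_one⟩

lemma Rp_edge_len {W : Type} {R : W → W → ℝ} {w : W} {n : ℕ} {p q : PW W R w n}
    (h : Epos (Rp R w n) p q) : q.1.length = p.1.length + 1 := by
  obtain ⟨a, ha⟩ := Rp_pos_iff.mp h
  rw [ha]; rfl

lemma tree_facts {W : Type} (R : W → W → ℝ) (w : W) (n : ℕ) :
    IsTreeLike (Epos (Rp R w n)) (PW.root R w n) ∧
    HeightLE (Epos (Rp R w n)) (PW.root R w n) n := by
  have hlen : ∀ {p q : PW W R w n}, Relation.TransGen (Epos (Rp R w n)) p q →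
      p.1.length < q.1.length := by
    intro p q h
    induction h with
    | single h => rw [Rp_edge_len h]; omega
    | tail _ h2 ih => have := Rp_edge_len h2; omega
  refine ⟨⟨?_, ?_, ?_, ?_⟩, ?_⟩
  · rintro ⟨l, hl⟩
    induction l with
    | nil => exact Relation.ReflTransGen.refl
    | cons a l ih =>
      refine Relation.ReflTransGen.tail (ih ⟨hl.1.2, by
        have := hl.2; simp at this ⊢; omega⟩) ?_
      exact Rp_pos_iff.mpr ⟨a, rfl⟩
  · intro q h
    obtain ⟨a, ha⟩ := Rp_pos_iff.mp h
    exact List.cons_ne_nil a q.1 ha.symm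
  · intro u u' q hu hu'
    obtain ⟨a, ha⟩ := Rp_pos_iff.mp hu
    obtain ⟨a', ha'⟩ := Rp_pos_iff.mp hu'
    apply Subtype.ext
    rw [ha] at ha'
    exact (List.cons.injEq _ _ _ _ ▸ ha').2
  · intro q h
    exact lt_irrefl _ (hlen h)
  · intro k f h0 hstep
    have : ∀ i, i ≤ k → (f i).1.length = i := by
      intro i
      induction i with
      | zero => intro _; rw [h0]; rfl
      | succ i ih =>
        intro hik
        rw [Rp_edge_len (hstep i (by omega)), ih (by omega)]
    have hk := this k le_rfl
    have := (f k).2.2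
    omega

/-! ### Bounds for evaluations -/

lemma eval_bounds {W : Type} [Nonempty W] (R : W → W → ℝ)
    (hR : ∀ a b, R a b ∈ Set.Icc (0:ℝ) 1)
    (v : ℕ → W → ℝ) (hv : ∀ p w, v p w ∈ Set.Icc (0:ℝ) 1) :
    ∀ (φ : Fml) (w : W), Fml.eval R v φ w ∈ Set.Icc (0:ℝ) 1 := by
  intro φ
  induction φ with
  | var i => exact fun w => hv i w
  | inv φ ih =>
    intro w
    simp only [Fml.eval, Set.mem_Icc] at *
    constructor <;> linarith [(ih w).1, (ih w).2]
  | and φ χ ih1 ih2 =>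
    intro w
    exact ⟨le_min (ih1 w).1 (ih2 w).1, le_trans (min_le_left _ _) (ih1 w).2⟩
  | imp φ χ ih1 ih2 =>
    intro w
    exact Gimp_mem_Icc (ih2 w)
  | box φ ih =>
    intro w
    have hbb : BddBelow (Set.range fun w' => Gimp (R w w') (Fml.eval R v φ w')) :=
      ⟨0, by rintro _ ⟨w', rfl⟩; exact (Gimp_mem_Icc (ih w')).1⟩
    constructor
    · exact le_csInf (Set.range_nonempty _)
        (by rintro _ ⟨w', rfl⟩; exact (Gimp_mem_Icc (ih w')).1)
    · obtain ⟨w₀⟩ := ‹Nonempty W›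
      exact le_trans (csInf_le hbb (Set.mem_range_self w₀)) (Gimp_mem_Icc (ih w₀)).2
  | dia φ ih =>
    intro w
    have hba : BddAbove (Set.range fun w' => min (R w w') (Fml.eval R v φ w')) :=
      ⟨1, by rintro _ ⟨w', rfl⟩; exact le_trans (min_le_right _ _) (ih w').2⟩
    constructor
    · obtain ⟨w₀⟩ := ‹Nonempty W›
      exact le_trans (le_min (hR w w₀).1 (ih w₀).1) (le_csSup hba (Set.mem_range_self w₀))
    · exact csSup_le (Set.range_nonempty _)
        (by rintro _ ⟨w', rfl⟩; exact le_trans (min_le_right _ _) (ih w').2)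

lemma feval_bounds {W : Type} [Nonempty W] (M : FModel W) (hM : M.Good) :
    ∀ (φ : Fml) (w : W), FModel.eval M φ w ∈ Set.Icc (0:ℝ) 1 := by
  obtain ⟨hR, hTfin, hTsub, hT01, hv⟩ := hM
  intro φ
  induction φ with
  | var i => exact fun w => hv i w
  | inv φ ih =>
    intro w
    simp only [FModel.eval, Set.mem_Icc] at *
    constructor <;> linarith [(ih w).1, (ih w).2]
  | and φ χ ih1 ih2 =>
    intro w
    exact ⟨le_min (ih1 w).1 (ih2 w).1, le_trans (min_le_left _ _) (ih1 w).2⟩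
  | imp φ χ ih1 ih2 =>
    intro w
    exact Gimp_mem_Icc (ih2 w)
  | box φ ih =>
    intro w
    have h0 : (0:ℝ) ∈ {x | x ∈ M.T w ∧
        x ≤ sInf (Set.range fun w' => Gimp (M.R w w') (FModel.eval M φ w'))} := by
      refine ⟨(hT01 w).1, ?_⟩
      exact le_csInf (Set.range_nonempty _)
        (by rintro _ ⟨w', rfl⟩; exact (Gimp_mem_Icc (ih w')).1)
    have hfin : {x | x ∈ M.T w ∧
        x ≤ sInf (Set.range fun w' => Gimp (M.R w w') (FModel.eval M φ w'))}.Finite :=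
      (hTfin w).subset (fun x hx => hx.1)
    constructor
    · exact le_csSup hfin.bddAbove h0
    · exact csSup_le ⟨0, h0⟩ (fun x hx => (hTsub w hx.1).2)
  | dia φ ih =>
    intro w
    have h1 : (1:ℝ) ∈ {x | x ∈ M.T w ∧
        sSup (Set.range fun w' => min (M.R w w') (FModel.eval M φ w')) ≤ x} := by
      refine ⟨(hT01 w).2, ?_⟩
      exact csSup_le (Set.range_nonempty _)
        (by rintro _ ⟨w', rfl⟩; exact le_trans (min_le_right _ _) (ih w').2)
    have hfin : {x | x ∈ M.T w ∧
        sSup (Set.range fun w' => min (M.R w w') (FModel.eval M φ w')) ≤ x}.Finite :=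
      (hTfin w).subset (fun x hx => hx.1)
    constructor
    · exact le_csInf ⟨1, h1⟩ (fun x hx => (hTsub w hx.1).1)
    · exact csInf_le hfin.bddBelow h1

/-! ### The unravelled models agree on small formulas -/

lemma headD_cons {W : Type} (a : W) (l : List W) (w : W) :
    (a :: l).headD w = a := rfl

lemma eval_tree {W : Type} [Nonempty W] (R : W → W → ℝ)
    (hR : ∀ a b, R a b ∈ Set.Icc (0:ℝ) 1)
    (v : ℕ → W → ℝ) (hv : ∀ p w, v p w ∈ Set.Icc (0:ℝ) 1)
    (w : W) (n : ℕ) :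
    ∀ (φ : Fml) (p : PW W R w n), φ.size + p.1.length ≤ n →
      Fml.eval (Rp R w n) (fun i q => v i (q.1.headD w)) φ p
        = Fml.eval R v φ (p.1.headD w) := by
  have hv' : ∀ (i : ℕ) (q : PW W R w n), v i (q.1.headD w) ∈ Set.Icc (0:ℝ) 1 :=
    fun i q => hv i _
  have hbnd := eval_bounds R hR v hv
  have hbnd' := eval_bounds (Rp R w n) (Rp_mem R hR w n) _ hv'
  intro φ
  induction φ with
  | var i => intro p _; rfl
  | inv φ ih =>
    intro p hp
    simp only [Fml.size] at hp
    simp only [Fml.eval]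
    rw [ih p (by omega)]
  | and φ χ ih1 ih2 =>
    intro p hp
    simp only [Fml.size] at hp
    simp only [Fml.eval]
    rw [ih1 p (by omega), ih2 p (by omega)]
  | imp φ χ ih1 ih2 =>
    intro p hp
    simp only [Fml.size] at hp
    simp only [Fml.eval]
    rw [ih1 p (by omega), ih2 p (by omega)]
  | box φ ih =>
    intro p hp
    simp only [Fml.size] at hp
    have hsz := Fml.size_pos' φ
    simp only [Fml.eval]
    apply sInf_range_eq'
    · intro q; exact Gimp_mem_Icc (hbnd' φ q)
    · intro b; exact Gimp_mem_Icc (hbnd φ b)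
    · intro q
      by_cases hq : ∃ a, q.1 = a :: p.1
      · right
        obtain ⟨b, hb⟩ := hq
        refine ⟨b, ?_⟩
        have hhead : q.1.headD w = b := by rw [hb]; rfl
        have hlen : q.1.length = p.1.length + 1 := by rw [hb]; rfl
        rw [Rp, if_pos ⟨b, hb⟩, ih q (by omega), hhead]
      · left
        rw [Rp, if_neg hq]
        exact Gimp_zero_left (hbnd' φ q).1
    · intro b
      by_cases hb : 0 < R (p.1.headD w) b
      · right
        refine ⟨⟨b :: p.1, ⟨hb, p.2.1⟩, by
          have := p.2.2; simp; omega⟩, ?_⟩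
        set q : PW W R w n := ⟨b :: p.1, ⟨hb, p.2.1⟩, by
          have := p.2.2; simp; omega⟩ with hqdef
        have hhead : q.1.headD w = b := rfl
        have hlen : q.1.length = p.1.length + 1 := rfl
        rw [Rp, if_pos ⟨b, rfl⟩, ih q (by omega), hhead]
      · left
        have : R (p.1.headD w) b = 0 :=
          le_antisymm (not_lt.mp hb) (hR _ _).1
        rw [this]
        exact Gimp_zero_left (hbnd φ b).1
  | dia φ ih =>
    intro p hp
    simp only [Fml.size] at hp
    have hsz := Fml.size_pos' φ
    simp only [Fml.eval]
    apply sSup_range_eq'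
    · intro q
      exact ⟨le_min (Rp_mem R hR w n p q).1 (hbnd' φ q).1,
        le_trans (min_le_right _ _) (hbnd' φ q).2⟩
    · intro b
      exact ⟨le_min (hR _ _).1 (hbnd φ b).1,
        le_trans (min_le_right _ _) (hbnd φ b).2⟩
    · intro q
      by_cases hq : ∃ a, q.1 = a :: p.1
      · right
        obtain ⟨b, hb⟩ := hq
        refine ⟨b, ?_⟩
        have hhead : q.1.headD w = b := by rw [hb]; rfl
        have hlen : q.1.length = p.1.length + 1 := by rw [hb]; rfl
        rw [Rp, if_pos ⟨b, hb⟩, ih q (by omega), hhead]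
      · left
        rw [Rp, if_neg hq]
        exact min_eq_left (hbnd' φ q).1
    · intro b
      by_cases hb : 0 < R (p.1.headD w) b
      · right
        refine ⟨⟨b :: p.1, ⟨hb, p.2.1⟩, by
          have := p.2.2; simp; omega⟩, ?_⟩
        set q : PW W R w n := ⟨b :: p.1, ⟨hb, p.2.1⟩, by
          have := p.2.2; simp; omega⟩ with hqdef
        have hhead : q.1.headD w = b := rfl
        have hlen : q.1.length = p.1.length + 1 := rfl
        rw [Rp, if_pos ⟨b, rfl⟩, ih q (by omega), hhead]
      · left
        have : R (p.1.headD w) b = 0 :=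
          le_antisymm (not_lt.mp hb) (hR _ _).1
        rw [this]
        exact min_eq_left (hbnd φ b).1

/-- The unravelled F-model. -/
noncomputable def Mp {W : Type} (M : FModel W) (w : W) (n : ℕ) :
    FModel (PW W M.R w n) where
  R := Rp M.R w n
  T := fun q => M.T (q.1.headD w)
  v := fun i q => M.v i (q.1.headD w)

lemma Mp_good {W : Type} (M : FModel W) (hM : M.Good) (w : W) (n : ℕ) :
    (Mp M w n).Good := by
  obtain ⟨hR, hTfin, hTsub, hT01, hv⟩ := hM
  exact ⟨Rp_mem M.R hR w n, fun q => hTfin _, fun q => hTsub _,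
    fun q => hT01 _, fun i q => hv i _⟩

lemma feval_tree {W : Type} [Nonempty W] (M : FModel W) (hM : M.Good)
    (w : W) (n : ℕ) :
    ∀ (φ : Fml) (p : PW W M.R w n), φ.size + p.1.length ≤ n →
      FModel.eval (Mp M w n) φ p = FModel.eval M φ (p.1.headD w) := by
  have hbnd := feval_bounds M hM
  have hbnd' := feval_bounds (Mp M w n) (Mp_good M hM w n)
  have hR := hM.1
  intro φ
  induction φ with
  | var i => intro p _; rfl
  | inv φ ih =>
    intro p hp
    simp only [Fml.size] at hp
    simp only [FModel.eval]
    rw [ih p (by omega)]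
  | and φ χ ih1 ih2 =>
    intro p hp
    simp only [Fml.size] at hp
    simp only [FModel.eval]
    rw [ih1 p (by omega), ih2 p (by omega)]
  | imp φ χ ih1 ih2 =>
    intro p hp
    simp only [Fml.size] at hp
    simp only [FModel.eval]
    rw [ih1 p (by omega), ih2 p (by omega)]
  | box φ ih =>
    intro p hp
    simp only [Fml.size] at hp
    have hsz := Fml.size_pos' φ
    simp only [FModel.eval]
    have key : sInf (Set.range fun q => Gimp ((Mp M w n).R p q) (FModel.eval (Mp M w n) φ q))
        = sInf (Set.range fun b => Gimp (M.R (p.1.headD w) b) (FModel.eval M φ b)) := by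
      apply sInf_range_eq'
      · intro q; exact Gimp_mem_Icc (hbnd' φ q)
      · intro b; exact Gimp_mem_Icc (hbnd φ b)
      · intro q
        by_cases hq : ∃ a, q.1 = a :: p.1
        · right
          obtain ⟨b, hb⟩ := hq
          refine ⟨b, ?_⟩
          have hhead : q.1.headD w = b := by rw [hb]; rfl
          have hlen : q.1.length = p.1.length + 1 := by rw [hb]; rfl
          show Gimp (Rp M.R w n p q) _ = _
          rw [Rp, if_pos ⟨b, hb⟩, ih q (by omega), hhead]
        · left
          show Gimp (Rp M.R w n p q) _ = _
          rw [Rp, if_neg hq]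
          exact Gimp_zero_left (hbnd' φ q).1
      · intro b
        by_cases hb : 0 < M.R (p.1.headD w) b
        · right
          refine ⟨⟨b :: p.1, ⟨hb, p.2.1⟩, by
            have := p.2.2; simp; omega⟩, ?_⟩
          set q : PW W M.R w n := ⟨b :: p.1, ⟨hb, p.2.1⟩, by
            have := p.2.2; simp; omega⟩ with hqdef
          have hhead : q.1.headD w = b := rfl
          have hlen : q.1.length = p.1.length + 1 := rfl
          show _ = Gimp (Rp M.R w n p q) _
          rw [Rp, if_pos ⟨b, rfl⟩, ih q (by omega), hhead]
        · left
          have : M.R (p.1.headD w) b = 0 :=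
            le_antisymm (not_lt.mp hb) (hR _ _).1
          rw [this]
          exact Gimp_zero_left (hbnd φ b).1
    rw [key]
    rfl
  | dia φ ih =>
    intro p hp
    simp only [Fml.size] at hp
    have hsz := Fml.size_pos' φ
    simp only [FModel.eval]
    have key : sSup (Set.range fun q => min ((Mp M w n).R p q) (FModel.eval (Mp M w n) φ q))
        = sSup (Set.range fun b => min (M.R (p.1.headD w) b) (FModel.eval M φ b)) := by
      apply sSup_range_eq'
      · intro q
        exact ⟨le_min (Rp_mem M.R hR w n p q).1 (hbnd' φ q).1,
          le_trans (min_le_right _ _) (hbnd' φ q).2⟩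
      · intro b
        exact ⟨le_min (hR _ _).1 (hbnd φ b).1,
          le_trans (min_le_right _ _) (hbnd φ b).2⟩
      · intro q
        by_cases hq : ∃ a, q.1 = a :: p.1
        · right
          obtain ⟨b, hb⟩ := hq
          refine ⟨b, ?_⟩
          have hhead : q.1.headD w = b := by rw [hb]; rfl
          have hlen : q.1.length = p.1.length + 1 := by rw [hb]; rfl
          show min (Rp M.R w n p q) _ = _
          rw [Rp, if_pos ⟨b, hb⟩, ih q (by omega), hhead]
        · left
          show min (Rp M.R w n p q) _ = _
          rw [Rp, if_neg hq]
          exact min_eq_left (hbnd' φ q).1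
      · intro b
        by_cases hb : 0 < M.R (p.1.headD w) b
        · right
          refine ⟨⟨b :: p.1, ⟨hb, p.2.1⟩, by
            have := p.2.2; simp; omega⟩, ?_⟩
          set q : PW W M.R w n := ⟨b :: p.1, ⟨hb, p.2.1⟩, by
            have := p.2.2; simp; omega⟩ with hqdef
          have hhead : q.1.headD w = b := rfl
          have hlen : q.1.length = p.1.length + 1 := rfl
          show _ = min (Rp M.R w n p q) _
          rw [Rp, if_pos ⟨b, rfl⟩, ih q (by omega), hhead]
        · left
          have : M.R (p.1.headD w) b = 0 :=
            le_antisymm (not_lt.mp hb) (hR _ _).1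
          rw [this]
          exact min_eq_left (hbnd φ b).1
    rw [key]
    rfl


/-- Every pointed model (plain or F) can be replaced by a tree-like model of height
at most |φ| giving φ the same value at the root. -/
theorem statement15 :
    (∀ (W : Type) (_ : Nonempty W) (R : W → W → ℝ),
      (∀ w w', R w w' ∈ Set.Icc (0:ℝ) 1) →
      ∀ v : ℕ → W → ℝ, (∀ p w, v p w ∈ Set.Icc (0:ℝ) 1) →
      ∀ (w : W) (φ : Fml),
        ∃ (W' : Type) (_ : Nonempty W') (R' : W' → W' → ℝ) (v' : ℕ → W' → ℝ) (r : W'),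
          (∀ a b, R' a b ∈ Set.Icc (0:ℝ) 1) ∧ (∀ p a, v' p a ∈ Set.Icc (0:ℝ) 1) ∧
          IsTreeLike (Epos R') r ∧ HeightLE (Epos R') r φ.size ∧
          Fml.eval R' v' φ r = Fml.eval R v φ w) ∧
    (∀ (W : Type) (_ : Nonempty W) (M : FModel W), M.Good →
      ∀ (w : W) (φ : Fml),
        ∃ (W' : Type) (_ : Nonempty W') (M' : FModel W') (r : W'),
          M'.Good ∧ IsTreeLike (Epos M'.R) r ∧ HeightLE (Epos M'.R) r φ.size ∧
          M'.eval φ r = M.eval φ w) := by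
  constructor
  · intro W _ R hR v hv w φ
    refine ⟨PW W R w φ.size, inferInstance, Rp R w φ.size,
      (fun i q => v i (q.1.headD w)), PW.root R w φ.size,
      Rp_mem R hR w φ.size, (fun i q => hv i _), (tree_facts R w φ.size).1,
      (tree_facts R w φ.size).2, ?_⟩
    exact eval_tree R hR v hv w φ.size φ (PW.root R w φ.size) (by simp [PW.root])
  · intro W _ M hM w φ
    refine ⟨PW W M.R w φ.size, inferInstance, Mp M w φ.size, PW.root M.R w φ.size,
      Mp_good M hM w φ.size, (tree_facts M.R w φ.size).1,
      (tree_facts M.R w φ.size).2, ?_⟩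
    exact feval_tree M hM w φ.size φ (PW.root M.R w φ.size) (by simp [PW.root])
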